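/- For fixed k ≥ 3, ℓ ≥ 2 with k ≥ ℓ and all n > k + ℓ: g(n,k,ℓ) < h(n,k,ℓ), where g(n,k,ℓ) = Σ_{i=2}^{ℓ+1} C(ℓ+1,i)·C(n−ℓ−1, k−i) + C(ℓ+1, ℓ) and h(n,k,ℓ) = C(n,k) − 2·C(n−ℓ,k) + C(n−2ℓ,k) + 2. -/

import Mathlib

open Finset

/-- Vandermonde as a range sum. -/
lemma aux_vand (m a k : ℕ) :
    (m + a).choose k = ∑ i ∈ range (k + 1), m.choose i * a.choose (k - i) := by
  rw [Nat.add_choose_eq, Finset.Nat.sum_antidiagonal_eq_sum_range_succ_mk]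

/-- Strict growth of choose in the top argument. -/
lemma aux_strict (c a m : ℕ) (hc : 2 ≤ c) (ha : c + 1 ≤ a) (hm : m + 1 ≤ a) :
    m.choose c + 2 ≤ a.choose c := by
  obtain ⟨b, rfl⟩ : ∃ b, a = b + 1 := ⟨a - 1, by omega⟩
  obtain ⟨d, rfl⟩ : ∃ d, c = d + 1 := ⟨c - 1, by omega⟩
  have hp := Nat.choose_succ_succ b d
  have h1 : m.choose (d + 1) ≤ b.choose (d + 1) := Nat.choose_le_choose _ (by omega)
  have h2 : d + 1 ≤ b.choose d := by
    calc d + 1 = (d + 1).choose d := (Nat.choose_succ_self_right d).symm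
      _ ≤ b.choose d := Nat.choose_le_choose _ (by omega)
  simp only [Nat.succ_eq_add_one] at *
  omega

/-- Key inequality: C(a,k) + t < t·C(a,k-1) + C(a-t,k). -/
lemma aux_key (k a : ℕ) (hk : 3 ≤ k) (ha : k ≤ a) :
    ∀ t, 1 ≤ t → a.choose k + t < t * a.choose (k - 1) + (a - t).choose k := by
  obtain ⟨c, rfl⟩ : ∃ c, k = c + 1 := ⟨k - 1, by omega⟩
  simp only [Nat.add_sub_cancel]
  intro t
  induction t with
  | zero => omega
  | succ t ih =>
    intro _
    rcases Nat.eq_zero_or_pos t with rfl | ht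
    · -- base case t + 1 = 1
      obtain ⟨b, rfl⟩ : ∃ b, a = b + 1 := ⟨a - 1, by omega⟩
      have hp := Nat.choose_succ_succ b c
      have hq : b.choose c + 2 ≤ (b + 1).choose c :=
        aux_strict c (b + 1) b (by omega) (by omega) (by omega)
      simp only [Nat.succ_eq_add_one] at hp
      simp only [zero_add, one_mul, Nat.add_sub_cancel]
      omega
    · -- inductive step
      have IH := ih ht
      have claim : (a - t).choose (c + 1) + 1 ≤ a.choose c + (a - (t + 1)).choose (c + 1) := by
        rcases Nat.eq_zero_or_pos (a - t) with h0 | hpos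
        · rw [h0, Nat.choose_eq_zero_of_lt (by omega)]
          have : 1 ≤ a.choose c := Nat.choose_pos (by omega)
          omega
        · obtain ⟨m, hm⟩ : ∃ m, a - t = m + 1 := ⟨a - t - 1, by omega⟩
          have hm' : a - (t + 1) = m := by omega
          rw [hm, hm']
          have hp := Nat.choose_succ_succ m c
          have h1 : m.choose c + 2 ≤ a.choose c :=
            aux_strict c a m (by omega) (by omega) (by omega)
          simp only [Nat.succ_eq_add_one] at *
          omega
      have hmul : (t + 1) * a.choose c = t * a.choose c + a.choose c := by ring
      omega

/-- Proposition 4.2: g(n,k,ℓ) < h(n,k,ℓ) for n > k + ℓ, k ≥ 3, ℓ ≥ 2, k ≥ ℓ. -/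
theorem stmt19 (n k l : ℕ) (hk : 3 ≤ k) (hl : 2 ≤ l) (hlk : l ≤ k)
    (hn : k + l < n) :
    ((∑ i ∈ Finset.Icc 2 (l + 1),
        (l + 1).choose i * (if i ≤ k then (n - l - 1).choose (k - i) else 0)
      + (l + 1).choose l : ℕ) : ℤ)
      < (n.choose k : ℤ) - 2 * (n - l).choose k + (n - 2 * l).choose k + 2 := by
  set a := n - l - 1 with ha
  have han : n = l + 1 + a := by omega
  have hak : k ≤ a := by omega
  set S := ∑ i ∈ Finset.Icc 2 (l + 1),
      (l + 1).choose i * (if i ≤ k then a.choose (k - i) else 0) with hS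
  -- the common extension of both index sets
  have hsum_eq :
      ∑ i ∈ Ico 2 (k + 1), (l + 1).choose i * a.choose (k - i) = S := by
    have e1 : ∑ i ∈ Ico 2 (k + 1), (l + 1).choose i * a.choose (k - i)
        = ∑ i ∈ Ico 2 (k + 1),
            (l + 1).choose i * (if i ≤ k then a.choose (k - i) else 0) := by
      refine Finset.sum_congr rfl fun i hi => ?_
      rw [Finset.mem_Ico] at hi
      rw [if_pos (by omega)]
    have e2 : ∑ i ∈ Ico 2 (k + 1),
            (l + 1).choose i * (if i ≤ k then a.choose (k - i) else 0)
        = ∑ i ∈ Icc 2 (k + l),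
            (l + 1).choose i * (if i ≤ k then a.choose (k - i) else 0) := by
      refine Finset.sum_subset ?_ fun x hx hx' => ?_
      · intro x hx
        rw [Finset.mem_Ico] at hx
        rw [Finset.mem_Icc]
        omega
      · rw [Finset.mem_Icc] at hx
        rw [Finset.mem_Ico] at hx'
        rw [if_neg (by omega), mul_zero]
    have e3 : S = ∑ i ∈ Icc 2 (k + l),
            (l + 1).choose i * (if i ≤ k then a.choose (k - i) else 0) := by
      refine Finset.sum_subset ?_ fun x hx hx' => ?_
      · intro x hx
        rw [Finset.mem_Icc] at hx ⊢
        omega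
      · rw [Finset.mem_Icc] at hx hx'
        rw [Nat.choose_eq_zero_of_lt (by omega), zero_mul]
    rw [e1, e2, ← e3]
  -- F1 : Vandermonde decomposition
  have F1 : n.choose k = a.choose k + (l + 1) * a.choose (k - 1) + S := by
    have hv := aux_vand (l + 1) a k
    rw [← han] at hv
    rw [hv, Finset.range_eq_Ico,
      Finset.sum_eq_sum_Ico_succ_bot (by omega : 0 < k + 1),
      Finset.sum_eq_sum_Ico_succ_bot (by omega : 1 < k + 1), hsum_eq]
    simp [Nat.choose_one_right]
    ring
  -- F2 : Pascal for (n - l)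
  have F2 : (n - l).choose k = a.choose (k - 1) + a.choose k := by
    have h1 : n - l = a + 1 := by omega
    obtain ⟨c, hc⟩ : ∃ c, k = c + 1 := ⟨k - 1, by omega⟩
    rw [h1, hc, Nat.choose_succ_succ]
    simp
  -- F3
  have F3 : (l + 1).choose l = l + 1 := Nat.choose_succ_self_right l
  -- F4 : key inequality with t = l - 1
  have F4 : a.choose k + (l - 1) < (l - 1) * a.choose (k - 1) + (n - 2 * l).choose k := by
    have h := aux_key k a hk hak (l - 1) (by omega)
    have : a - (l - 1) = n - 2 * l := by omega
    rwa [this] at h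
  -- assemble over ℤ
  have c1 : (n.choose k : ℤ) = a.choose k + (l + 1) * a.choose (k - 1) + S := by
    exact_mod_cast congrArg (Nat.cast : ℕ → ℤ) F1
  have c2 : ((n - l).choose k : ℤ) = a.choose (k - 1) + a.choose k := by
    exact_mod_cast congrArg (Nat.cast : ℕ → ℤ) F2
  have c4 : (a.choose k : ℤ) + ((l : ℤ) - 1)
      < ((l : ℤ) - 1) * a.choose (k - 1) + (n - 2 * l).choose k := by
    have := F4
    have hcast : ((l - 1 : ℕ) : ℤ) = (l : ℤ) - 1 := by
      push_cast [Nat.cast_sub (by omega : 1 ≤ l)]; ring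
    calc (a.choose k : ℤ) + ((l : ℤ) - 1)
        = ((a.choose k + (l - 1) : ℕ) : ℤ) := by push_cast; omega
      _ < (((l - 1) * a.choose (k - 1) + (n - 2 * l).choose k : ℕ) : ℤ) := by
          exact_mod_cast this
      _ = ((l : ℤ) - 1) * a.choose (k - 1) + (n - 2 * l).choose k := by
          push_cast; rw [hcast]  -- may need adjustment
  rw [F3]
  push_cast
  nlinarith [c1, c2, c4]
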